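/- The probability measure η_γ with S-transform S_{η_γ}(z) = exp(−γz) has mean 1 and its CSK family has pseudo-variance function V_{η_γ}(m) = γ m² / ln(m) and variance function V_{η_γ}(m) = γ m(m−1)/ln(m) on its domain of means contained in (0,1). -/

import Mathlib

open MeasureTheory Set Filter Topology ENNReal

noncomputable section

/-- Cauchy-Stieltjes moment-type transform `M_ν(θ) = ∫ 1/(1-θx) dν(x)`. -/
def Mcs (ν : Measure ℝ) (θ : ℝ) : ℝ := ∫ x, 1 / (1 - θ * x) ∂ν

/-- The mean map `k_ν(θ) = (M_ν(θ) - 1)/(θ M_ν(θ))`. -/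
def kcs (ν : Measure ℝ) (θ : ℝ) : ℝ := (Mcs ν θ - 1) / (θ * Mcs ν θ)

/-- The Cauchy transform `G_ν(z) = ∫ 1/(z-x) dν(x)`. -/
def Gcs (ν : Measure ℝ) (z : ℝ) : ℝ := ∫ x, 1 / (z - x) ∂ν

/-- `Ψ_ν(z) = ∫ zx/(1-zx) dν(x)`. -/
def PsiT (ν : Measure ℝ) (z : ℝ) : ℝ := ∫ x, z * x / (1 - z * x) ∂ν

/-- Topological support of a measure on ℝ. -/
def msupp (ν : Measure ℝ) : Set ℝ := {x | ∀ U ∈ 𝓝 x, ν U ≠ 0}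

/-- The natural parameter domain `(θ₋, θ₊) \ {0}`: nonzero `θ` with `θ x < 1` on the support. -/
def ΘDom (ν : Measure ℝ) : Set ℝ := {θ | θ ≠ 0 ∧ ∀ x ∈ msupp ν, θ * x < 1}

/-- Right-sided parameter domain `(0, θ₊)`. -/
def ΘPlus (ν : Measure ℝ) : Set ℝ := {θ | 0 < θ ∧ ∀ x ∈ msupp ν, θ * x < 1}

/-- `ψ_ν`, the inverse of the mean map `k_ν` on the parameter domain. -/
def ψcs (ν : Measure ℝ) : ℝ → ℝ := Function.invFunOn (kcs ν) (ΘDom ν)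

/-- `ψ_ν` for the right-sided family. -/
def ψplus (ν : Measure ℝ) : ℝ → ℝ := Function.invFunOn (kcs ν) (ΘPlus ν)

/-- `ψ_ν` for the left-sided family (measures on `[0,∞)`, parameter `θ < 0`). -/
def ψminus (ν : Measure ℝ) : ℝ → ℝ := Function.invFunOn (kcs ν) (Iio 0)

/-- The pseudo-variance function `𝕍_ν(m) = m (1/ψ_ν(m) - m)`. -/
def pseudoVar (ν : Measure ℝ) (m : ℝ) : ℝ := m * (1 / ψcs ν m - m)

def pseudoVarMinus (ν : Measure ℝ) (m : ℝ) : ℝ := m * (1 / ψminus ν m - m)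

/-- The tilted measure `P_{θ,ν}(dx) = ν(dx)/(M_ν(θ)(1-θx))`. -/
def tilt (ν : Measure ℝ) (θ : ℝ) : Measure ℝ :=
  ν.withDensity (fun x => ENNReal.ofReal (1 / (Mcs ν θ * (1 - θ * x))))

/-- `Q_{m,ν}`, the element of the CSK family with mean `m`. -/
def Qcsk (ν : Measure ℝ) (m : ℝ) : Measure ℝ := tilt ν (ψcs ν m)

def QcskMinus (ν : Measure ℝ) (m : ℝ) : Measure ℝ := tilt ν (ψminus ν m)

/-- The variance function `V_ν(m) = ∫ (x-m)² dQ_{m,ν}(x)`. -/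
def varFun (ν : Measure ℝ) (m : ℝ) : ℝ := ∫ x, (x - m) ^ 2 ∂(Qcsk ν m)

def varFunMinus (ν : Measure ℝ) (m : ℝ) : ℝ := ∫ x, (x - m) ^ 2 ∂(QcskMinus ν m)

/-- Domain of means (two-sided). -/
def meanDom (ν : Measure ℝ) : Set ℝ := kcs ν '' ΘDom ν

/-- Right-sided domain of means `(m₀(ν), m₊(ν))`. -/
def meanDomPlus (ν : Measure ℝ) : Set ℝ := kcs ν '' ΘPlus ν

/-- Left-sided domain of means `(m₋(ν), m₀(ν))`. -/
def meanDomMinus (ν : Measure ℝ) : Set ℝ := kcs ν '' Iio 0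

/-- `χ_ν`, the inverse of `Ψ_ν` on negative reals. -/
def χT (ν : Measure ℝ) : ℝ → ℝ := Function.invFunOn (PsiT ν) (Iio 0)

/-- The S-transform `S_ν(z) = χ_ν(z)(1+z)/z`. -/
def Stransf (ν : Measure ℝ) (z : ℝ) : ℝ := χT ν z * (1 + z) / z

/-- `m₋(ν) = -1/G_ν(0)` for a measure on `[0,∞)`. -/
def mMinus (ν : Measure ℝ) : ℝ := -(Gcs ν 0)⁻¹

/-- The self-energy (K-transform) `K_ν(z) = z - 1/G_ν(z)`. -/
def KT (ν : Measure ℝ) (z : ℝ) : ℝ := z - 1 / Gcs ν z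

/-- A measure is non-degenerate if it is not a Dirac mass. -/
def Nondeg (ν : Measure ℝ) : Prop := ∀ c : ℝ, ν ≠ Measure.dirac c
def pseudoVarPlus (ν : Measure ℝ) (m : ℝ) : ℝ := m * (1 / ψplus ν m - m)

def QcskPlus (ν : Measure ℝ) (m : ℝ) : Measure ℝ := tilt ν (ψplus ν m)

def varFunPlus (ν : Measure ℝ) (m : ℝ) : ℝ := ∫ x, (x - m) ^ 2 ∂(QcskPlus ν m)

/-- The mean of a measure on `[0,∞)`, as an extended nonnegative real. -/
def m0E (ν : Measure ℝ) : ℝ≥0∞ := ∫⁻ x, ENNReal.ofReal x ∂ν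

/-- The Σ-transform `Σ_ν(z) = S_ν(z/(1-z))`. -/
def SigmaT (ν : Measure ℝ) (z : ℝ) : ℝ := Stransf ν (z / (1 - z))

/-- The free Poisson (Marchenko–Pastur) law with density `(1/2π)√((4-x)/x)` on `(0,4)`. -/
def freePoisson : Measure ℝ :=
  volume.withDensity (fun x => ENNReal.ofReal
    (Set.indicator (Ioo 0 4) (fun y => (1/(2*Real.pi)) * Real.sqrt ((4 - y)/y)) x))

set_option linter.unusedSectionVars false
section EtaAux
variable {η : Measure ℝ} [IsProbabilityMeasure η]

lemma ae_nonneg (hpos : η (Iio 0) = 0) : ∀ᵐ x ∂η, 0 ≤ x := by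
  rw [ae_iff]
  convert hpos using 2
  ext x; simp [not_le, Iio]

lemma meas_Ioi_pos (hpos : η (Iio 0) = 0) (hatom : η {0} < 1) : 0 < η (Ioi 0) := by
  by_contra h
  push_neg at h
  have h0 : η (Ioi 0) = 0 := le_antisymm h zero_le
  have : (1:ℝ≥0∞) = η univ := (measure_univ (μ := η)).symm
  have hsub : (univ : Set ℝ) ⊆ Iio 0 ∪ ({0} ∪ Ioi 0) := by
    intro x _
    rcases lt_trichotomy x 0 with hx | hx | hx
    · exact Or.inl hx
    · exact Or.inr (Or.inl hx)
    · exact Or.inr (Or.inr hx)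
  have : η univ ≤ η (Iio 0) + (η {0} + η (Ioi 0)) :=
    le_trans (measure_mono hsub) (le_trans (measure_union_le _ _)
      (by gcongr; exact measure_union_le _ _))
  rw [hpos, h0, measure_univ] at this
  simp only [zero_add, add_zero] at this
  exact absurd hatom (not_lt.mpr this)

lemma measurable_invlin (θ : ℝ) : Measurable (fun x : ℝ => 1 / (1 - θ * x)) := by
  apply Measurable.div measurable_const
  exact measurable_const.sub (measurable_id.const_mul θ)

lemma invlin_bounds {θ x : ℝ} (hθ : θ < 0) (hx : 0 ≤ x) :
    0 < 1 / (1 - θ * x) ∧ 1 / (1 - θ * x) ≤ 1 ∧ 1 ≤ 1 - θ * x := by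
  have h1 : 1 ≤ 1 - θ * x := by nlinarith
  have h0 : 0 < 1 - θ * x := lt_of_lt_of_le one_pos h1
  exact ⟨by positivity, by rw [div_le_one h0]; linarith, h1⟩

lemma integrable_invlin (hpos : η (Iio 0) = 0) {θ : ℝ} (hθ : θ < 0) :
    Integrable (fun x => 1 / (1 - θ * x)) η := by
  refine ⟨(measurable_invlin θ).aestronglyMeasurable, ?_⟩
  apply HasFiniteIntegral.mono' (g := fun _ => (1:ℝ)) (integrable_const (1:ℝ)).2
  filter_upwards [ae_nonneg hpos] with x hx
  have := invlin_bounds hθ hx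
  rw [Real.norm_eq_abs, abs_of_pos this.1]
  exact this.2.1
end EtaAux
section EtaAux2
set_option linter.unusedSectionVars false
variable {η : Measure ℝ} [IsProbabilityMeasure η]

lemma integral_pos_of_Ioi {f : ℝ → ℝ} (hpos : η (Iio 0) = 0) (hatom : η {0} < 1)
    (hf : Integrable f η) (hnn : ∀ᵐ x ∂η, 0 ≤ f x) (hIoi : ∀ x, 0 < x → 0 < f x) :
    0 < ∫ x, f x ∂η := by
  rw [integral_pos_iff_support_of_nonneg_ae hnn hf]
  refine lt_of_lt_of_le (meas_Ioi_pos hpos hatom) (measure_mono ?_)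
  intro x hx
  exact ne_of_gt (hIoi x hx)

lemma M_lt_one (hpos : η (Iio 0) = 0) (hatom : η {0} < 1) {θ : ℝ} (hθ : θ < 0) :
    Mcs η θ < 1 := by
  have h : 0 < ∫ x, (1 - 1 / (1 - θ * x)) ∂η := by
    refine integral_pos_of_Ioi hpos hatom
      ((integrable_const 1).sub (integrable_invlin hpos hθ)) ?_ ?_
    · filter_upwards [ae_nonneg hpos] with x hx
      have := invlin_bounds hθ hx
      linarith [this.2.1]
    · intro x hx
      have h1 : 1 < 1 - θ * x := by nlinarith
      have : 1 / (1 - θ * x) < 1 := by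
        rw [div_lt_one (by linarith)]; exact h1
      linarith
  rw [integral_sub (integrable_const 1) (integrable_invlin hpos hθ), integral_const] at h
  simp only [probReal_univ, ENNReal.toReal_one, smul_eq_mul, one_mul] at h
  have : Mcs η θ = ∫ x, 1 / (1 - θ * x) ∂η := rfl
  linarith

lemma a_lt_M (hpos : η (Iio 0) = 0) (hatom : η {0} < 1) {θ : ℝ} (hθ : θ < 0) :
    (η {0}).toReal < Mcs η θ := by
  have hind : Integrable (fun x => ({0} : Set ℝ).indicator (fun _ => (1:ℝ)) x) η :=
    (integrable_const 1).indicator (measurableSet_singleton 0)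
  have h : 0 < ∫ x, (1 / (1 - θ * x) - ({0} : Set ℝ).indicator (fun _ => (1:ℝ)) x) ∂η := by
    refine integral_pos_of_Ioi hpos hatom ((integrable_invlin hpos hθ).sub hind) ?_ ?_
    · filter_upwards [ae_nonneg hpos] with x hx
      rcases eq_or_lt_of_le hx with h0 | h0
      · simp [← h0]
      · have := (invlin_bounds hθ hx).1
        rw [indicator_of_notMem (by simpa using ne_of_gt h0)]
        linarith
    · intro x hx
      rw [indicator_of_notMem (by simpa using ne_of_gt hx)]
      simpa using (invlin_bounds hθ (le_of_lt hx)).1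
  rw [integral_sub (integrable_invlin hpos hθ) hind, integral_indicator_const _
    (measurableSet_singleton 0)] at h
  simp only [smul_eq_mul, mul_one, measureReal_def] at h
  have : Mcs η θ = ∫ x, 1 / (1 - θ * x) ∂η := rfl
  linarith

lemma M_pos (hpos : η (Iio 0) = 0) (hatom : η {0} < 1) {θ : ℝ} (hθ : θ < 0) :
    0 < Mcs η θ := lt_of_le_of_lt ENNReal.toReal_nonneg (a_lt_M hpos hatom hθ)

lemma M_strictMono (hpos : η (Iio 0) = 0) (hatom : η {0} < 1) {θ₁ θ₂ : ℝ}
    (h12 : θ₁ < θ₂) (hθ₂ : θ₂ < 0) : Mcs η θ₁ < Mcs η θ₂ := by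
  have hθ₁ : θ₁ < 0 := lt_trans h12 hθ₂
  have h : 0 < ∫ x, (1 / (1 - θ₂ * x) - 1 / (1 - θ₁ * x)) ∂η := by
    refine integral_pos_of_Ioi hpos hatom
      ((integrable_invlin hpos hθ₂).sub (integrable_invlin hpos hθ₁)) ?_ ?_
    · filter_upwards [ae_nonneg hpos] with x hx
      have h2 := invlin_bounds hθ₂ hx
      have hle : 1 - θ₂ * x ≤ 1 - θ₁ * x := by nlinarith
      have := one_div_le_one_div_of_le (lt_of_lt_of_le one_pos h2.2.2) hle
      linarith
    · intro x hx
      have h2 : (0:ℝ) < 1 - θ₂ * x := by nlinarith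
      have hlt : 1 - θ₂ * x < 1 - θ₁ * x := by nlinarith
      have := one_div_lt_one_div_of_lt h2 hlt
      linarith
  rw [integral_sub (integrable_invlin hpos hθ₂) (integrable_invlin hpos hθ₁)] at h
  have e1 : Mcs η θ₁ = ∫ x, 1 / (1 - θ₁ * x) ∂η := rfl
  have e2 : Mcs η θ₂ = ∫ x, 1 / (1 - θ₂ * x) ∂η := rfl
  linarith

lemma PsiT_eq_M (hpos : η (Iio 0) = 0) {θ : ℝ} (hθ : θ < 0) :
    PsiT η θ = Mcs η θ - 1 := by
  have : PsiT η θ = ∫ x, (1 / (1 - θ * x) - 1) ∂η := by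
    refine integral_congr_ae ?_
    filter_upwards [ae_nonneg hpos] with x hx
    have h := (invlin_bounds hθ hx).2.2
    have hne : 1 - θ * x ≠ 0 := by linarith
    field_simp
    ring
  rw [this, integral_sub (integrable_invlin hpos hθ) (integrable_const 1), integral_const]
  simp [Mcs]

lemma intxlin_eq (hpos : η (Iio 0) = 0) {θ : ℝ} (hθ : θ < 0) :
    ∫ x, x / (1 - θ * x) ∂η = (Mcs η θ - 1) / θ := by
  have hne : θ ≠ 0 := ne_of_lt hθ
  have : (fun x => x / (1 - θ * x)) =ᵐ[η]
      (fun x => (1/θ) * (1 / (1 - θ * x)) - 1/θ) := by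
    filter_upwards [ae_nonneg hpos] with x hx
    have h := (invlin_bounds hθ hx).2.2
    have hne2 : 1 - θ * x ≠ 0 := by linarith
    rw [div_eq_iff hne2, sub_mul, mul_assoc, one_div_mul_cancel hne2]
    field_simp
    ring
  rw [integral_congr_ae this, integral_sub (((integrable_invlin hpos hθ)).const_mul _)
    (integrable_const _), integral_const_mul, integral_const]
  simp only [probReal_univ, ENNReal.toReal_one, smul_eq_mul, one_mul]
  have : Mcs η θ = ∫ x, 1 / (1 - θ * x) ∂η := rfl
  rw [← this]; ring

lemma integrable_xlin (hpos : η (Iio 0) = 0) {θ : ℝ} (hθ : θ < 0) :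
    Integrable (fun x => x / (1 - θ * x)) η := by
  have : Integrable (fun x => (1/θ) * (1 / (1 - θ * x)) - 1/θ) η :=
    ((integrable_invlin hpos hθ).const_mul _).sub (integrable_const _)
  have hne : θ ≠ 0 := ne_of_lt hθ
  refine this.congr ?_
  filter_upwards [ae_nonneg hpos] with x hx
  have h := (invlin_bounds hθ hx).2.2
  have hne2 : 1 - θ * x ≠ 0 := by linarith
  field_simp
  ring
end EtaAux2
section EtaAux3
set_option linter.unusedSectionVars false
variable {η : Measure ℝ} [IsProbabilityMeasure η] {γ : ℝ}

lemma z_mem (hpos : η (Iio 0) = 0) (hatom : η {0} < 1) {θ : ℝ} (hθ : θ < 0) :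
    PsiT η θ ∈ Ioo ((η {0}).toReal - 1) (0:ℝ) := by
  rw [PsiT_eq_M hpos hθ]
  exact ⟨by linarith [a_lt_M hpos hatom hθ], by linarith [M_lt_one hpos hatom hθ]⟩

lemma Psi_injOn (hpos : η (Iio 0) = 0) (hatom : η {0} < 1) :
    InjOn (PsiT η) (Iio 0) := by
  intro a ha b hb hab
  rcases lt_trichotomy a b with h | h | h
  · have := M_strictMono hpos hatom h hb
    rw [PsiT_eq_M hpos ha, PsiT_eq_M hpos hb] at hab
    linarith
  · exact h
  · have := M_strictMono hpos hatom h ha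
    rw [PsiT_eq_M hpos ha, PsiT_eq_M hpos hb] at hab
    linarith

lemma chi_eq (hpos : η (Iio 0) = 0) (hatom : η {0} < 1) {θ : ℝ} (hθ : θ < 0) :
    χT η (PsiT η θ) = θ := by
  have hex : ∃ a ∈ Iio (0:ℝ), PsiT η a = PsiT η θ := ⟨θ, hθ, rfl⟩
  have h1 : PsiT η (χT η (PsiT η θ)) = PsiT η θ := Function.invFunOn_eq hex
  have h2 : χT η (PsiT η θ) ∈ Iio (0:ℝ) := Function.invFunOn_mem hex
  exact Psi_injOn hpos hatom h2 hθ h1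

lemma theta_formula (hγ : 0 < γ) (hpos : η (Iio 0) = 0) (hatom : η {0} < 1)
    (hS : ∀ z ∈ Ioo ((η {0}).toReal - 1) (0:ℝ), Stransf η z = Real.exp (-γ * z))
    {θ : ℝ} (hθ : θ < 0) :
    θ = (PsiT η θ) * Real.exp (-γ * PsiT η θ) / (1 + PsiT η θ) := by
  set z := PsiT η θ with hz
  have hzm := z_mem hpos hatom hθ
  have hSz := hS z hzm
  rw [Stransf, chi_eq hpos hatom hθ] at hSz
  have hz0 : z ≠ 0 := ne_of_lt hzm.2
  have h1z : 0 < 1 + z := by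
    have := a_lt_M hpos hatom hθ
    have := ENNReal.toReal_nonneg (a := η {0})
    rw [hz, PsiT_eq_M hpos hθ]
    linarith
  field_simp at hSz ⊢
  linarith [hSz]

lemma k_formula (hγ : 0 < γ) (hpos : η (Iio 0) = 0) (hatom : η {0} < 1)
    (hS : ∀ z ∈ Ioo ((η {0}).toReal - 1) (0:ℝ), Stransf η z = Real.exp (-γ * z))
    {θ : ℝ} (hθ : θ < 0) :
    kcs η θ = Real.exp (γ * PsiT η θ) := by
  set z := PsiT η θ with hz
  have hzm := z_mem hpos hatom hθ
  have hz0 : z ≠ 0 := ne_of_lt hzm.2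
  have hM : Mcs η θ = 1 + z := by rw [hz, PsiT_eq_M hpos hθ]; ring
  have h1z : 0 < 1 + z := by rw [← hM]; exact M_pos hpos hatom hθ
  have hθf := theta_formula hγ hpos hatom hS hθ
  rw [kcs, hM]
  rw [← hz] at hθf
  rw [hθf]
  have he : Real.exp (-γ * z) ≠ 0 := Real.exp_ne_zero _
  have h1z' : (1:ℝ) + z ≠ 0 := ne_of_gt h1z
  field_simp
  rw [Real.exp_neg]
  field_simp
  ring
end EtaAux3
section EtaAux4
set_option linter.unusedSectionVars false
variable {η : Measure ℝ} [IsProbabilityMeasure η] {γ : ℝ}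

lemma k_injOn (hγ : 0 < γ) (hpos : η (Iio 0) = 0) (hatom : η {0} < 1)
    (hS : ∀ z ∈ Ioo ((η {0}).toReal - 1) (0:ℝ), Stransf η z = Real.exp (-γ * z)) :
    InjOn (kcs η) (Iio 0) := by
  intro a ha b hb hab
  rw [k_formula hγ hpos hatom hS ha, k_formula hγ hpos hatom hS hb] at hab
  have h2 : γ * PsiT η a = γ * PsiT η b := Real.exp_injective hab
  exact Psi_injOn hpos hatom ha hb (mul_left_cancel₀ (ne_of_gt hγ) h2)

lemma psiminus_eq (hγ : 0 < γ) (hpos : η (Iio 0) = 0) (hatom : η {0} < 1)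
    (hS : ∀ z ∈ Ioo ((η {0}).toReal - 1) (0:ℝ), Stransf η z = Real.exp (-γ * z))
    {θ : ℝ} (hθ : θ < 0) : ψminus η (kcs η θ) = θ := by
  have hex : ∃ a ∈ Iio (0:ℝ), kcs η a = kcs η θ := ⟨θ, hθ, rfl⟩
  have h1 : kcs η (ψminus η (kcs η θ)) = kcs η θ := Function.invFunOn_eq hex
  have h2 : ψminus η (kcs η θ) ∈ Iio (0:ℝ) := Function.invFunOn_mem hex
  exact k_injOn hγ hpos hatom hS h2 hθ h1

lemma pv_formula (hγ : 0 < γ) (hpos : η (Iio 0) = 0) (hatom : η {0} < 1)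
    (hS : ∀ z ∈ Ioo ((η {0}).toReal - 1) (0:ℝ), Stransf η z = Real.exp (-γ * z))
    {θ : ℝ} (hθ : θ < 0) :
    pseudoVarMinus η (kcs η θ) = γ * (kcs η θ) ^ 2 / Real.log (kcs η θ) ∧
    1 / θ = (1 + PsiT η θ) * Real.exp (γ * PsiT η θ) / PsiT η θ := by
  set z := PsiT η θ with hz
  have hzm := z_mem hpos hatom hθ
  have hz0 : z ≠ 0 := ne_of_lt hzm.2
  have hM : Mcs η θ = 1 + z := by rw [hz, PsiT_eq_M hpos hθ]; ring
  have h1z : 0 < 1 + z := by rw [← hM]; exact M_pos hpos hatom hθ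
  have hk := k_formula hγ hpos hatom hS hθ
  have hθf := theta_formula hγ hpos hatom hS hθ
  rw [← hz] at hθf hk
  have hθ0 : θ ≠ 0 := ne_of_lt hθ
  rw [← hz] at hzm
  clear_value z
  have h1z' : (1:ℝ) + z ≠ 0 := ne_of_gt h1z
  have he' : Real.exp (γ * z) ≠ 0 := Real.exp_ne_zero _
  have e1 : Real.exp (-γ * z) * Real.exp (γ * z) = 1 := by
    rw [← Real.exp_add]
    norm_num
  have key : θ * (Real.exp (γ * z) * (1 + z)) = z := by
    rw [hθf, div_mul_eq_mul_div, div_eq_iff h1z']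
    linear_combination (z * (1 + z)) * e1
  have hinv : 1 / θ = (1 + z) * Real.exp (γ * z) / z := by
    rw [div_eq_div_iff hθ0 hz0, one_mul]
    linear_combination -key
  refine ⟨?_, hinv⟩
  rw [pseudoVarMinus, psiminus_eq hγ hpos hatom hS hθ, hk, hinv, Real.log_exp,
    mul_div_mul_left _ _ (ne_of_gt hγ)]
  rw [div_sub' hz0, ← mul_div_assoc]
  congr 1
  ring
end EtaAux4
section EtaAux5
set_option linter.unusedSectionVars false
variable {η : Measure ℝ} [IsProbabilityMeasure η] {γ : ℝ}

lemma intx_val (hγ : 0 < γ) (hpos : η (Iio 0) = 0) (hatom : η {0} < 1)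
    (hS : ∀ z ∈ Ioo ((η {0}).toReal - 1) (0:ℝ), Stransf η z = Real.exp (-γ * z))
    {θ : ℝ} (hθ : θ < 0) :
    ∫ x, x / (1 - θ * x) ∂η = (1 + PsiT η θ) * Real.exp (γ * PsiT η θ) := by
  rw [intxlin_eq hpos hθ]
  set z := PsiT η θ with hz
  have hzm := z_mem hpos hatom hθ
  have hz0 : z ≠ 0 := ne_of_lt hzm.2
  have hM : Mcs η θ = 1 + z := by rw [hz, PsiT_eq_M hpos hθ]; ring
  have h1z : 0 < 1 + z := by rw [← hM]; exact M_pos hpos hatom hθ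
  have hθf := theta_formula hγ hpos hatom hS hθ
  rw [← hz] at hθf
  have hθ0 : θ ≠ 0 := ne_of_lt hθ
  rw [← hz] at hzm
  clear_value z
  have h1z' : (1:ℝ) + z ≠ 0 := ne_of_gt h1z
  have e1 : Real.exp (-γ * z) * Real.exp (γ * z) = 1 := by
    rw [← Real.exp_add]
    norm_num
  have key : θ * (Real.exp (γ * z) * (1 + z)) = z := by
    rw [hθf, div_mul_eq_mul_div, div_eq_iff h1z']
    linear_combination (z * (1 + z)) * e1
  rw [hM, div_eq_iff hθ0]
  linear_combination -key

private def θseq (n : ℕ) : ℝ := -((n:ℝ)+1)⁻¹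

lemma θseq_neg (n : ℕ) : θseq n < 0 := by
  have : (0:ℝ) < ((n:ℝ)+1)⁻¹ := by positivity
  simp only [θseq]; linarith

lemma θseq_mono : Monotone θseq := by
  intro n m h
  simp only [θseq, neg_le_neg_iff]
  apply inv_anti₀ (by positivity)
  have : (n:ℝ) ≤ (m:ℝ) := Nat.cast_le.mpr h
  linarith

lemma θseq_tendsto : Tendsto θseq atTop (𝓝 0) := by
  have h : Tendsto (fun n : ℕ => ((n:ℝ)+1)⁻¹) atTop (𝓝 0) := by
    apply tendsto_inv_atTop_zero.comp
    exact tendsto_natCast_atTop_atTop.atTop_add tendsto_const_nhds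
  have := h.neg
  rw [show θseq = fun n : ℕ => -((n:ℝ)+1)⁻¹ from rfl]
  simpa using this

lemma den_tendsto (x : ℝ) :
    Tendsto (fun n => 1 / (1 - θseq n * x)) atTop (𝓝 1) := by
  have h1 : Tendsto (fun n => θseq n * x) atTop (𝓝 0) := by
    simpa using θseq_tendsto.mul_const x
  have h2 : Tendsto (fun n => 1 - θseq n * x) atTop (𝓝 1) := by
    simpa using (tendsto_const_nhds (x := (1:ℝ))).sub h1
  simpa [one_div] using h2.inv₀ one_ne_zero

lemma M_tendsto (hpos : η (Iio 0) = 0) :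
    Tendsto (fun n => Mcs η (θseq n)) atTop (𝓝 1) := by
  have := tendsto_integral_of_dominated_convergence (μ := η)
    (F := fun n x => 1 / (1 - θseq n * x)) (f := fun _ => (1:ℝ)) (bound := fun _ => (1:ℝ))
    (fun n => (measurable_invlin (θseq n)).aestronglyMeasurable)
    (integrable_const 1)
    (fun n => by
      filter_upwards [ae_nonneg hpos] with x hx
      have h := invlin_bounds (θseq_neg n) hx
      rw [Real.norm_eq_abs, abs_of_pos h.1]
      exact h.2.1)
    (Eventually.of_forall fun x => den_tendsto x)
  simpa [Mcs] using this

lemma lint_x_eq_one (hγ : 0 < γ) (hpos : η (Iio 0) = 0) (hatom : η {0} < 1)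
    (hS : ∀ z ∈ Ioo ((η {0}).toReal - 1) (0:ℝ), Stransf η z = Real.exp (-γ * z)) :
    ∫⁻ x, ENNReal.ofReal x ∂η = 1 := by
  have hPto : Tendsto (fun n => PsiT η (θseq n)) atTop (𝓝 0) := by
    have h : ∀ n, PsiT η (θseq n) = Mcs η (θseq n) - 1 :=
      fun n => PsiT_eq_M hpos (θseq_neg n)
    simp only [h]
    simpa using (M_tendsto hpos).sub (tendsto_const_nhds (x := (1:ℝ)))
  have hRto : Tendsto
      (fun n => (1 + PsiT η (θseq n)) * Real.exp (γ * PsiT η (θseq n))) atTop (𝓝 1) := by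
    have h1 : Tendsto (fun n => 1 + PsiT η (θseq n)) atTop (𝓝 1) := by
      simpa using (tendsto_const_nhds (x := (1:ℝ))).add hPto
    have h2 : Tendsto (fun n => Real.exp (γ * PsiT η (θseq n))) atTop (𝓝 1) := by
      have := (Real.continuous_exp.tendsto 0).comp
        (by simpa using (tendsto_const_nhds (x := γ)).mul hPto)
      simpa [Function.comp_def] using this
    simpa using h1.mul h2
  have hlint : ∀ n, ∫⁻ x, ENNReal.ofReal (x / (1 - θseq n * x)) ∂η
      = ENNReal.ofReal ((1 + PsiT η (θseq n)) * Real.exp (γ * PsiT η (θseq n))) := by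
    intro n
    rw [← ofReal_integral_eq_lintegral_ofReal (integrable_xlin hpos (θseq_neg n))
      (by
        filter_upwards [ae_nonneg hpos] with x hx
        have h := (invlin_bounds (θseq_neg n) hx).2.2
        positivity)]
    rw [intx_val hγ hpos hatom hS (θseq_neg n)]
  have hmeas : ∀ n, AEMeasurable (fun x => ENNReal.ofReal (x / (1 - θseq n * x))) η := by
    intro n
    exact (Measurable.ennreal_ofReal (measurable_id.div
      (measurable_const.sub (measurable_id.const_mul _)))).aemeasurable
  have hmono : ∀ᵐ x ∂η, Monotone (fun n => ENNReal.ofReal (x / (1 - θseq n * x))) := by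
    filter_upwards [ae_nonneg hpos] with x hx
    intro n m hnm
    apply ENNReal.ofReal_le_ofReal
    have h1 := (invlin_bounds (θseq_neg n) hx).2.2
    have h2 := (invlin_bounds (θseq_neg m) hx).2.2
    have hθ : θseq n ≤ θseq m := θseq_mono hnm
    have hden : 1 - θseq m * x ≤ 1 - θseq n * x := by nlinarith
    exact div_le_div_of_nonneg_left hx (by linarith) hden
  have htend : ∀ᵐ x ∂η, Tendsto (fun n => ENNReal.ofReal (x / (1 - θseq n * x)))
      atTop (𝓝 (ENNReal.ofReal x)) := by
    refine Eventually.of_forall fun x => ?_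
    apply ENNReal.tendsto_ofReal
    have h1 : Tendsto (fun n => θseq n * x) atTop (𝓝 0) := by
      simpa using θseq_tendsto.mul_const x
    have h2 : Tendsto (fun n => 1 - θseq n * x) atTop (𝓝 1) := by
      simpa using (tendsto_const_nhds (x := (1:ℝ))).sub h1
    simpa [div_eq_mul_inv] using (h2.inv₀ one_ne_zero).const_mul x
  have h1 := lintegral_tendsto_of_tendsto_of_monotone hmeas hmono htend
  have h2 : Tendsto (fun n => ∫⁻ x, ENNReal.ofReal (x / (1 - θseq n * x)) ∂η)
      atTop (𝓝 1) := by
    simp only [hlint]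
    have := ENNReal.tendsto_ofReal hRto
    simpa using this
  exact tendsto_nhds_unique h1 h2

lemma mean_one (hγ : 0 < γ) (hpos : η (Iio 0) = 0) (hatom : η {0} < 1)
    (hS : ∀ z ∈ Ioo ((η {0}).toReal - 1) (0:ℝ), Stransf η z = Real.exp (-γ * z)) :
    ∫ x, x ∂η = 1 := by
  rw [integral_eq_lintegral_of_nonneg_ae (ae_nonneg hpos) aestronglyMeasurable_id]
  rw [lint_x_eq_one hγ hpos hatom hS]
  simp

lemma integrable_x (hγ : 0 < γ) (hpos : η (Iio 0) = 0) (hatom : η {0} < 1)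
    (hS : ∀ z ∈ Ioo ((η {0}).toReal - 1) (0:ℝ), Stransf η z = Real.exp (-γ * z)) :
    Integrable (fun x : ℝ => x) η := by
  refine ⟨aestronglyMeasurable_id, ?_⟩
  rw [HasFiniteIntegral]
  have : ∫⁻ x, ‖x‖ₑ ∂η = ∫⁻ x, ENNReal.ofReal x ∂η := by
    apply lintegral_congr_ae
    filter_upwards [ae_nonneg hpos] with x hx
    rw [← Real.enorm_eq_ofReal hx]
  rw [this, lint_x_eq_one hγ hpos hatom hS]
  exact one_lt_top
end EtaAux5
section EtaAux6
set_option linter.unusedSectionVars false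
variable {η : Measure ℝ} [IsProbabilityMeasure η] {γ : ℝ}

lemma var_formula (hγ : 0 < γ) (hpos : η (Iio 0) = 0) (hatom : η {0} < 1)
    (hS : ∀ z ∈ Ioo ((η {0}).toReal - 1) (0:ℝ), Stransf η z = Real.exp (-γ * z))
    {θ : ℝ} (hθ : θ < 0) :
    varFunMinus η (kcs η θ) = γ * (kcs η θ) * ((kcs η θ) - 1) / Real.log (kcs η θ) := by
  have hθ0 : θ ≠ 0 := ne_of_lt hθ
  have hzm := z_mem hpos hatom hθ
  have hz0 : PsiT η θ ≠ 0 := ne_of_lt hzm.2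
  have hM : Mcs η θ = 1 + PsiT η θ := by rw [PsiT_eq_M hpos hθ]; ring
  have hMpos : 0 < Mcs η θ := M_pos hpos hatom hθ
  have hM0 : Mcs η θ ≠ 0 := ne_of_gt hMpos
  have h1z : (0:ℝ) < 1 + PsiT η θ := by rw [← hM]; exact hMpos
  have hk := k_formula hγ hpos hatom hS hθ
  have hinv := (pv_formula hγ hpos hatom hS hθ).2
  have hψ : ψminus η (kcs η θ) = θ := psiminus_eq hγ hpos hatom hS hθ
  have hmeasR : Measurable (fun x : ℝ => 1 / (Mcs η θ * (1 - θ * x))) :=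
    Measurable.div measurable_const
      (measurable_const.mul (measurable_const.sub (measurable_id.const_mul θ)))
  obtain ⟨m, hm⟩ : ∃ m, kcs η θ = m := ⟨_, rfl⟩
  rw [hm] at hk hψ ⊢
  have hconv : varFunMinus η m
      = ∫ x, (1 / (Mcs η θ * (1 - θ * x))) * (x - m)^2 ∂η := by
    rw [varFunMinus, QcskMinus, hψ, tilt]
    have hrfl : (fun x => ENNReal.ofReal (1 / (Mcs η θ * (1 - θ * x))))
        = fun x => ((Real.toNNReal (1 / (Mcs η θ * (1 - θ * x)))) : ℝ≥0∞) := rfl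
    rw [hrfl, integral_withDensity_eq_integral_smul₀ hmeasR.real_toNNReal.aemeasurable]
    apply integral_congr_ae
    filter_upwards [ae_nonneg hpos] with x hx
    have hd := (invlin_bounds hθ hx).2.2
    have hnn : (0:ℝ) ≤ 1 / (Mcs η θ * (1 - θ * x)) := by positivity
    rw [NNReal.smul_def, Real.coe_toNNReal _ hnn, smul_eq_mul]
  have hptw : (fun x => (1 / (Mcs η θ * (1 - θ * x))) * (x - m)^2) =ᵐ[η]
      (fun x => (1/Mcs η θ) * ((-(1/θ))*x + (-(1/θ)+2*m)*(1/θ)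
        + (m^2-(-(1/θ)+2*m)*(1/θ))*(1/(1-θ*x)))) := by
    filter_upwards [ae_nonneg hpos] with x hx
    have hd : (1:ℝ) - θ*x ≠ 0 := by
      have := (invlin_bounds hθ hx).2.2; linarith
    field_simp
    ring
  have hIg := integrable_invlin hpos hθ
  have hIx := integrable_x hγ hpos hatom hS
  have hmean := mean_one hγ hpos hatom hS
  have i1 : Integrable (fun x : ℝ => (-(1/θ))*x + (-(1/θ)+2*m)*(1/θ)) η :=
    (hIx.const_mul (-(1/θ))).add (integrable_const _)
  have i2 : Integrable (fun x : ℝ => (m^2-(-(1/θ)+2*m)*(1/θ))*(1/(1-θ*x))) η :=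
    hIg.const_mul _
  have hInt : ∫ x, ((-(1/θ))*x + (-(1/θ)+2*m)*(1/θ)
        + (m^2-(-(1/θ)+2*m)*(1/θ))*(1/(1-θ*x))) ∂η
      = (-(1/θ)) * 1 + (-(1/θ)+2*m)*(1/θ) + (m^2-(-(1/θ)+2*m)*(1/θ)) * Mcs η θ := by
    rw [integral_add i1 i2, integral_add (hIx.const_mul (-(1/θ))) (integrable_const _),
        integral_const_mul, integral_const, hmean, integral_const_mul]
    simp only [probReal_univ, ENNReal.toReal_one, smul_eq_mul, one_mul]
    rfl
  rw [hconv, integral_congr_ae hptw, integral_const_mul, hInt]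
  rw [hk, Real.log_exp, hinv, hM]
  have h1z' : (1:ℝ) + PsiT η θ ≠ 0 := ne_of_gt h1z
  field_simp
  ring
end EtaAux6
/-- the measure `η_γ` with `S_{η_γ}(z) = exp(-γz)` has mean 1,
pseudo-variance function `γm²/ln m` and variance function `γm(m-1)/ln m`,
on a domain of means contained in `(0,1)`. -/
theorem eta_gamma_varFun (γ : ℝ) (hγ : 0 < γ)
    (η : Measure ℝ) [IsProbabilityMeasure η]
    (hnd : Nondeg η) (hpos : η (Iio 0) = 0) (hatom : η {0} < 1)
    (hS : ∀ z ∈ Ioo ((η {0}).toReal - 1) (0:ℝ), Stransf η z = Real.exp (-γ * z)) :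
    (∫ x, x ∂η) = 1 ∧ meanDomMinus η ⊆ Ioo 0 1 ∧
    ∀ m ∈ meanDomMinus η,
      pseudoVarMinus η m = γ * m ^ 2 / Real.log m ∧
      varFunMinus η m = γ * m * (m - 1) / Real.log m := by
  refine ⟨mean_one hγ hpos hatom hS, ?_, ?_⟩
  · intro m hm
    simp only [meanDomMinus, mem_image, mem_Iio] at hm
    obtain ⟨θ, hθ, rfl⟩ := hm
    rw [k_formula hγ hpos hatom hS hθ]
    refine ⟨Real.exp_pos _, ?_⟩
    have hz := (z_mem hpos hatom hθ).2
    exact Real.exp_lt_one_iff.mpr (mul_neg_of_pos_of_neg hγ hz)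
  · intro m hm
    simp only [meanDomMinus, mem_image, mem_Iio] at hm
    obtain ⟨θ, hθ, rfl⟩ := hm
    refine ⟨(pv_formula hγ hpos hatom hS hθ).1, ?_⟩
    exact var_formula hγ hpos hatom hS hθ
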